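/- Fix r ∈ ℝ with r ≠ 0, β > 0, ϑ > 0. Let μ be the measure on ℝ² (coordinates (x, θ)) whose density with respect to two-dimensional Lebesgue measure is p(x, θ) = (2πθ)^(−1/2) · exp(−x²/(2θ)) · gg(θ; r, β, ϑ) for θ > 0 and 0 for θ ≤ 0 (the joint SBL prior of one component x with conditional law N(0, θ) and hyper-parameter θ ~ GG(r, β, ϑ)). Define the Knothe–Rosenblatt map s(x, θ) = (s^θ(θ), x/√θ) for θ > 0 (and arbitrarily, e.g. (0,0), for θ ≤ 0, a μ-null set), where s^θ = Φ⁻ ∘ F with F the CDF of GG(r, β, ϑ), Φ the CDF of N(0, 1), and Φ⁻ = Function.invFun Φ. Then the pushforward of μ under s equals the two-dimensional standard normal distribution, i.e., the measure on ℝ² with density (2π)^(−1) · exp(−(τ² + u²)/2). -/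

import Mathlib

open MeasureTheory Real Set ProbabilityTheory

/-- The generalized gamma density `gg(θ; r, β, ϑ)`. -/
noncomputable def ggPdf (r β ϑ : ℝ) (θ : ℝ) : ℝ :=
  if 0 < θ then
    (|r| / (Real.Gamma β * ϑ ^ (r * β))) * θ ^ (r * β - 1) * Real.exp (-(θ / ϑ) ^ r)
  else 0

/-- The joint SBL prior density `p(x, θ) = N(x | 0, θ) · gg(θ; r, β, ϑ)`. -/
noncomputable def sblPdf (r β ϑ : ℝ) (x θ : ℝ) : ℝ :=
  if 0 < θ then
    (2 * π * θ) ^ (-(1 / 2 : ℝ)) * Real.exp (-x ^ 2 / (2 * θ)) * ggPdf r β ϑ θ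
  else 0

/-- The CDF of a measure on `ℝ`, as a real-valued function. -/
noncomputable def cdfFn (ν : Measure ℝ) (x : ℝ) : ℝ :=
  (ν (Set.Iic x)).toReal

open Filter

section CdfHelpers

variable {f : ℝ → ℝ}

lemma cdfFn_withDensity (hf_int : Integrable f) (hf_nn : ∀ x, 0 ≤ f x) (x : ℝ) :
    cdfFn (volume.withDensity (fun t => ENNReal.ofReal (f t))) x = ∫ t in Iic x, f t := by
  rw [cdfFn, withDensity_apply _ measurableSet_Iic,
    ← ofReal_integral_eq_lintegral_ofReal hf_int.integrableOn (ae_of_all _ hf_nn),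
    ENNReal.toReal_ofReal (integral_nonneg hf_nn)]

lemma continuous_cdfFn_withDensity (hf_int : Integrable f) (hf_nn : ∀ x, 0 ≤ f x) :
    Continuous (cdfFn (volume.withDensity (fun t => ENNReal.ofReal (f t)))) := by
  have h : cdfFn (volume.withDensity (fun t => ENNReal.ofReal (f t)))
      = fun x => (∫ t in Iic (0:ℝ), f t) + ∫ t in (0:ℝ)..x, f t := by
    funext x
    rw [cdfFn_withDensity hf_int hf_nn x,
      ← intervalIntegral.integral_Iic_sub_Iic hf_int.integrableOn hf_int.integrableOn]
    ring
  rw [h]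
  exact continuous_const.add (hf_int.continuous_primitive 0)

lemma isProbabilityMeasure_withDensity (hf_int : Integrable f) (hf_nn : ∀ x, 0 ≤ f x)
    (h1 : ∫ x, f x = 1) :
    IsProbabilityMeasure (volume.withDensity (fun t => ENNReal.ofReal (f t))) := by
  constructor
  rw [withDensity_apply _ MeasurableSet.univ, Measure.restrict_univ,
    ← ofReal_integral_eq_lintegral_ofReal hf_int (ae_of_all _ hf_nn), h1, ENNReal.ofReal_one]

lemma cdfFn_withDensity_lt (hf_int : Integrable f) (hf_nn : ∀ x, 0 ≤ f x)
    {a b : ℝ} (hab : a < b) (hpos : ∀ x ∈ Ioo a b, 0 < f x) :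
    cdfFn (volume.withDensity (fun t => ENNReal.ofReal (f t))) a
      < cdfFn (volume.withDensity (fun t => ENNReal.ofReal (f t))) b := by
  rw [cdfFn_withDensity hf_int hf_nn, cdfFn_withDensity hf_int hf_nn]
  have h1 := intervalIntegral.intervalIntegral_pos_of_pos_on hf_int.intervalIntegrable hpos hab
  have h2 := intervalIntegral.integral_Iic_sub_Iic (hf_int.integrableOn (s := Iic a))
    (hf_int.integrableOn (s := Iic b)) (μ := volume)
  linarith

end CdfHelpers

section GG
variable {r β ϑ : ℝ}

lemma ggPdf_nonneg (hβ : 0 < β) (hϑ : 0 < ϑ) (θ : ℝ) : 0 ≤ ggPdf r β ϑ θ := by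
  unfold ggPdf
  split_ifs with h
  · have := Real.Gamma_pos_of_pos hβ
    positivity
  · exact le_refl _

lemma ggPdf_pos (hr : r ≠ 0) (hβ : 0 < β) (hϑ : 0 < ϑ) {θ : ℝ} (hθ : 0 < θ) :
    0 < ggPdf r β ϑ θ := by
  unfold ggPdf
  rw [if_pos hθ]
  have := Real.Gamma_pos_of_pos hβ
  have h1 : (0:ℝ) < |r| := abs_pos.mpr hr
  positivity

lemma measurable_ggPdf (r β ϑ : ℝ) : Measurable (ggPdf r β ϑ) := by
  unfold ggPdf
  exact Measurable.ite measurableSet_Ioi (by measurability) measurable_const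

lemma gg_key_congr (hr : r ≠ 0) : ∀ x ∈ Ioi (0:ℝ),
    (|r| * x ^ (r - 1)) • (Real.exp (-(x ^ r)) * (x ^ r) ^ (β - 1))
      = |r| * (x ^ (r * β - 1) * Real.exp (-(x ^ r))) := by
  intro x hx
  have hx0 : (0:ℝ) < x := hx
  have e1 : (x ^ r) ^ (β - 1) = x ^ (r * (β - 1)) := (Real.rpow_mul hx0.le _ _).symm
  rw [smul_eq_mul, e1, show r * β - 1 = (r - 1) + r * (β - 1) by ring, Real.rpow_add hx0]
  ring

lemma integrableOn_G (hr : r ≠ 0) (hβ : 0 < β) :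
    IntegrableOn (fun x : ℝ => x ^ (r * β - 1) * Real.exp (-(x ^ r))) (Ioi 0) := by
  have h := (integrableOn_Ioi_comp_rpow_iff
      (fun y : ℝ => Real.exp (-y) * y ^ (β - 1)) hr).mpr (Real.GammaIntegral_convergent hβ)
  have h2 : IntegrableOn
      (fun x : ℝ => |r| * (x ^ (r * β - 1) * Real.exp (-(x ^ r)))) (Ioi 0) :=
    (integrableOn_congr_fun (gg_key_congr hr) measurableSet_Ioi).mp h
  have habs : |r| ≠ 0 := abs_ne_zero.mpr hr
  exact (integrable_smul_iff (μ := volume.restrict (Ioi 0)) habs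
    (fun x : ℝ => x ^ (r * β - 1) * Real.exp (-(x ^ r)))).mp h2

lemma integral_G (hr : r ≠ 0) (hβ : 0 < β) :
    ∫ x in Ioi (0:ℝ), x ^ (r * β - 1) * Real.exp (-(x ^ r)) = Real.Gamma β / |r| := by
  have h := integral_comp_rpow_Ioi (fun y : ℝ => Real.exp (-y) * y ^ (β - 1)) hr
  rw [setIntegral_congr_fun measurableSet_Ioi (gg_key_congr hr)] at h
  rw [MeasureTheory.integral_const_mul] at h
  rw [← Real.Gamma_eq_integral hβ] at h
  have habs : (0:ℝ) < |r| := abs_pos.mpr hr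
  field_simp at h ⊢
  linarith [h]

end GG

section GG2
variable {r β ϑ : ℝ}

lemma ggPdf_eq_scaled (hβ : 0 < β) (hϑ : 0 < ϑ) {θ : ℝ} (hθ : 0 < θ) :
    ggPdf r β ϑ θ = (|r| / (Real.Gamma β * ϑ ^ (r * β)) * ϑ ^ (r * β - 1))
      * ((ϑ⁻¹ * θ) ^ (r * β - 1) * Real.exp (-((ϑ⁻¹ * θ) ^ r))) := by
  unfold ggPdf
  rw [if_pos hθ]
  have h1 : ϑ⁻¹ * θ = θ / ϑ := (div_eq_inv_mul _ _).symm
  rw [h1]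
  have h2 : θ ^ (r * β - 1) = ϑ ^ (r * β - 1) * (θ / ϑ) ^ (r * β - 1) := by
    rw [← Real.mul_rpow hϑ.le (by positivity : (0:ℝ) ≤ θ / ϑ),
      mul_div_cancel₀ _ hϑ.ne']
  rw [h2]; ring

lemma integrable_ggPdf (hr : r ≠ 0) (hβ : 0 < β) (hϑ : 0 < ϑ) :
    Integrable (ggPdf r β ϑ) := by
  have hG : IntegrableOn (fun x : ℝ => x ^ (r * β - 1) * Real.exp (-(x ^ r))) (Ioi 0) :=
    integrableOn_G hr hβ
  have hscale : IntegrableOn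
      (fun θ : ℝ => (ϑ⁻¹ * θ) ^ (r * β - 1) * Real.exp (-((ϑ⁻¹ * θ) ^ r))) (Ioi 0) := by
    have := (integrableOn_Ioi_comp_mul_left_iff
      (fun x : ℝ => x ^ (r * β - 1) * Real.exp (-(x ^ r))) 0 (inv_pos.mpr hϑ)).mpr
    simpa using this (by simpa using hG)
  have hon : IntegrableOn (ggPdf r β ϑ) (Ioi 0) := by
    refine (integrableOn_congr_fun (fun θ hθ => ?_) measurableSet_Ioi).mpr
      (hscale.const_mul (|r| / (Real.Gamma β * ϑ ^ (r * β)) * ϑ ^ (r * β - 1)))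
    exact ggPdf_eq_scaled hβ hϑ hθ
  have : ggPdf r β ϑ = Set.indicator (Ioi 0) (ggPdf r β ϑ) := by
    funext θ
    by_cases hθ : 0 < θ
    · simp [Set.indicator_apply, Set.mem_Ioi, hθ]
    · simp only [Set.indicator_apply, Set.mem_Ioi, hθ, if_false]
      unfold ggPdf; rw [if_neg hθ]
  rw [this]
  exact (integrable_indicator_iff measurableSet_Ioi).mpr hon

lemma integral_ggPdf (hr : r ≠ 0) (hβ : 0 < β) (hϑ : 0 < ϑ) :
    ∫ θ, ggPdf r β ϑ θ = 1 := by
  rw [← setIntegral_eq_integral_of_forall_compl_eq_zero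
    (s := Ioi (0:ℝ)) (fun θ hθ => by unfold ggPdf; rw [if_neg (by simpa using hθ)])]
  rw [setIntegral_congr_fun measurableSet_Ioi (fun θ hθ => ggPdf_eq_scaled hβ hϑ hθ)]
  rw [MeasureTheory.integral_const_mul]
  have hsub := integral_comp_mul_left_Ioi
    (fun x : ℝ => x ^ (r * β - 1) * Real.exp (-(x ^ r))) 0 (inv_pos.mpr hϑ)
  simp only [mul_zero, smul_eq_mul, inv_inv] at hsub
  rw [hsub, integral_G hr hβ]
  have hΓ := Real.Gamma_pos_of_pos hβ
  have habs : (0:ℝ) < |r| := abs_pos.mpr hr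
  have hpow : (0:ℝ) < ϑ ^ (r * β) := Real.rpow_pos_of_pos hϑ _
  have hkey : ϑ ^ (r * β - 1) * ϑ = ϑ ^ (r * β) := by
    rw [← Real.rpow_add_one hϑ.ne' (r * β - 1)]
    norm_num
  have hstep : |r| / (Real.Gamma β * ϑ ^ (r * β)) * ϑ ^ (r * β - 1)
      * (ϑ * (Real.Gamma β / |r|))
      = (ϑ ^ (r * β - 1) * ϑ) * Real.Gamma β * |r| / (Real.Gamma β * ϑ ^ (r * β) * |r|) := by
    ring
  rw [hstep, hkey]
  field_simp
end GG2

section Gauss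

lemma gaussianReal_eq_withDensity :
    gaussianReal 0 1 = volume.withDensity
      (fun x => ENNReal.ofReal (gaussianPDFReal 0 1 x)) := by
  rw [gaussianReal_of_var_ne_zero 0 one_ne_zero, gaussianPDF_def]

lemma continuous_gaussCdf : Continuous (cdfFn (gaussianReal 0 1)) := by
  rw [gaussianReal_eq_withDensity]
  exact continuous_cdfFn_withDensity (integrable_gaussianPDFReal 0 1)
    (gaussianPDFReal_nonneg 0 1)

lemma strictMono_gaussCdf : StrictMono (cdfFn (gaussianReal 0 1)) := by
  intro a b hab
  rw [gaussianReal_eq_withDensity]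
  exact cdfFn_withDensity_lt (integrable_gaussianPDFReal 0 1) (gaussianPDFReal_nonneg 0 1)
    hab (fun x _ => gaussianPDFReal_pos 0 1 x one_ne_zero)

lemma gaussCdf_le_one (t : ℝ) : cdfFn (gaussianReal 0 1) t ≤ 1 := by
  rw [cdfFn]
  exact ENNReal.toReal_le_of_le_ofReal zero_le_one (by simpa using prob_le_one)

lemma gaussCdf_mem_Ioo (t : ℝ) : cdfFn (gaussianReal 0 1) t ∈ Ioo (0:ℝ) 1 := by
  constructor
  · have h1 : (0:ℝ) ≤ cdfFn (gaussianReal 0 1) (t - 1) := ENNReal.toReal_nonneg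
    have h2 := strictMono_gaussCdf (show t - 1 < t by linarith)
    linarith
  · have h2 := strictMono_gaussCdf (show t < t + 1 by linarith)
    have h1 := gaussCdf_le_one (t + 1)
    linarith

lemma tendsto_gaussCdf_atTop :
    Tendsto (cdfFn (gaussianReal 0 1)) atTop (nhds 1) := by
  have h := tendsto_measure_Iic_atTop (gaussianReal 0 1)
  have h2 := (ENNReal.tendsto_toReal (a := 1) ENNReal.one_ne_top).comp (by simpa using h)
  exact (by simpa using h2 :
    Tendsto (ENNReal.toReal ∘ fun x => (gaussianReal 0 1) (Iic x)) atTop (nhds 1))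

lemma tendsto_gaussCdf_atBot :
    Tendsto (cdfFn (gaussianReal 0 1)) atBot (nhds 0) := by
  have h := tendsto_measure_iInter_atBot (μ := gaussianReal 0 1) (s := fun x : ℝ => Iic x)
    (fun x => measurableSet_Iic.nullMeasurableSet) (fun a b hab => Iic_subset_Iic.mpr hab)
    ⟨0, measure_ne_top _ _⟩
  have hempty : ⋂ x : ℝ, Iic x = (∅ : Set ℝ) := by
    apply eq_empty_iff_forall_notMem.mpr
    intro y hy
    have := mem_iInter.mp hy (y - 1)
    simp only [mem_Iic] at this
    linarith
  rw [hempty, measure_empty] at h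
  have h2 := (ENNReal.tendsto_toReal (a := 0) (by simp)).comp h
  exact (by simpa [Function.comp] using h2 :
    Tendsto (ENNReal.toReal ∘ ⇑(gaussianReal 0 1) ∘ fun x => Iic x) atBot (nhds 0))

lemma gaussCdf_surj {y : ℝ} (hy : y ∈ Ioo (0:ℝ) 1) : ∃ t, cdfFn (gaussianReal 0 1) t = y := by
  obtain ⟨ha, hb⟩ := hy
  obtain ⟨a, hay⟩ := (tendsto_gaussCdf_atBot.eventually_lt_const ha).exists
  obtain ⟨b, hby⟩ := (tendsto_gaussCdf_atTop.eventually_const_lt hb).exists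
  have hab : a ≤ b := by
    by_contra hcon
    push_neg at hcon
    exact absurd (strictMono_gaussCdf hcon) (by linarith)
  have := intermediate_value_Icc hab continuous_gaussCdf.continuousOn
  obtain ⟨t, _, ht⟩ := this ⟨hay.le, hby.le⟩
  exact ⟨t, ht⟩

end Gauss


section InvFun

lemma invFun_eq_extend {f : ℝ → ℝ} :
    Function.invFun f = Function.extend f id (fun _ => Classical.arbitrary ℝ) := by
  classical
  funext b
  rw [Function.extend_def]
  unfold Function.invFun
  split_ifs with h
  · rfl
  · rfl

lemma measurable_invFun_gaussCdf :
    Measurable (Function.invFun (cdfFn (gaussianReal 0 1))) := by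
  have hemb : MeasurableEmbedding (cdfFn (gaussianReal 0 1)) :=
    continuous_gaussCdf.measurableEmbedding strictMono_gaussCdf.injective
  rw [invFun_eq_extend]
  exact hemb.measurable_extend measurable_id measurable_const

end InvFun

section Transform

lemma measure_Iic_eq_ofReal_cdfFn (ν : Measure ℝ) [IsFiniteMeasure ν] (x : ℝ) :
    ν (Iic x) = ENNReal.ofReal (cdfFn ν x) :=
  (ENNReal.ofReal_toReal (measure_ne_top ν _)).symm

variable {r β ϑ : ℝ}

lemma ggCdf_zero (hβ : 0 < β) (hϑ : 0 < ϑ) (hr : r ≠ 0) {x : ℝ} (hx : x ≤ 0) :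
    cdfFn (volume.withDensity fun θ : ℝ => ENNReal.ofReal (ggPdf r β ϑ θ)) x = 0 := by
  rw [cdfFn_withDensity (integrable_ggPdf hr hβ hϑ) (ggPdf_nonneg hβ hϑ)]
  rw [setIntegral_congr_fun measurableSet_Iic (g := fun _ => (0:ℝ))
    (fun t ht => by
      have : ¬ 0 < t := by simp only [mem_Iic] at ht; linarith
      unfold ggPdf; rw [if_neg this]),
    integral_zero]

lemma ggCdf_strictMonoOn (hr : r ≠ 0) (hβ : 0 < β) (hϑ : 0 < ϑ) :
    StrictMonoOn (cdfFn (volume.withDensity fun θ : ℝ => ENNReal.ofReal (ggPdf r β ϑ θ)))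
      (Ici 0) := by
  intro a ha b _ hab
  exact cdfFn_withDensity_lt (integrable_ggPdf hr hβ hϑ) (ggPdf_nonneg hβ hϑ) hab
    (fun x hx => ggPdf_pos hr hβ hϑ (lt_of_le_of_lt ha hx.1))

lemma ggProb (hr : r ≠ 0) (hβ : 0 < β) (hϑ : 0 < ϑ) :
    IsProbabilityMeasure (volume.withDensity fun θ : ℝ => ENNReal.ofReal (ggPdf r β ϑ θ)) :=
  isProbabilityMeasure_withDensity (integrable_ggPdf hr hβ hϑ) (ggPdf_nonneg hβ hϑ)
    (integral_ggPdf hr hβ hϑ)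

lemma map_KR_theta (hr : r ≠ 0) (hβ : 0 < β) (hϑ : 0 < ϑ) :
    (volume.withDensity fun θ : ℝ => ENNReal.ofReal (ggPdf r β ϑ θ)).map
      (Function.invFun (cdfFn (gaussianReal 0 1)) ∘
        cdfFn (volume.withDensity fun θ : ℝ => ENNReal.ofReal (ggPdf r β ϑ θ)))
      = gaussianReal 0 1 := by
  set ν : Measure ℝ := volume.withDensity fun θ : ℝ => ENNReal.ofReal (ggPdf r β ϑ θ) with hν
  set F : ℝ → ℝ := cdfFn ν with hF
  set Φ : ℝ → ℝ := cdfFn (gaussianReal 0 1) with hΦ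
  set Φi : ℝ → ℝ := Function.invFun Φ with hΦi
  haveI : IsProbabilityMeasure ν := ggProb hr hβ hϑ
  have hFcont : Continuous F :=
    continuous_cdfFn_withDensity (integrable_ggPdf hr hβ hϑ) (ggPdf_nonneg hβ hϑ)
  have hFmono : StrictMonoOn F (Ici 0) := ggCdf_strictMonoOn hr hβ hϑ
  have hF0 : F 0 = 0 := ggCdf_zero hβ hϑ hr le_rfl
  have hFle1 : ∀ x, F x ≤ 1 := fun x =>
    ENNReal.toReal_le_of_le_ofReal zero_le_one (by simpa using prob_le_one (μ := ν))
  have hFmem : ∀ {θ : ℝ}, 0 < θ → F θ ∈ Ioo (0:ℝ) 1 := by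
    intro θ hθ
    constructor
    · have := hFmono (le_refl (0:ℝ)) hθ.le hθ
      rw [hF0] at this; exact this
    · have h1 := hFmono hθ.le (by linarith : (0:ℝ) ≤ θ + 1) (by linarith)
      have h2 := hFle1 (θ + 1)
      linarith
  have hFtop : Filter.Tendsto F Filter.atTop (nhds 1) := by
    have h := tendsto_measure_Iic_atTop ν
    have h2 := (ENNReal.tendsto_toReal (a := 1) ENNReal.one_ne_top).comp (by simpa using h)
    exact (by simpa using h2 : Tendsto (ENNReal.toReal ∘ fun x => ν (Iic x)) atTop (nhds 1))
  have hmeas : Measurable (Φi ∘ F) := measurable_invFun_gaussCdf.comp hFcont.measurable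
  haveI : IsProbabilityMeasure (ν.map (Φi ∘ F)) := Measure.isProbabilityMeasure_map hmeas.aemeasurable
  refine Measure.ext_of_Iic (ν.map (Φi ∘ F)) (gaussianReal 0 1) (fun t => ?_)
  rw [Measure.map_apply hmeas measurableSet_Iic]
  have hΦt := gaussCdf_mem_Ioo t
  -- find θ₀
  obtain ⟨M, hM1, hM0⟩ : ∃ M, Φ t < F M ∧ (0:ℝ) ≤ M :=
    ((hFtop.eventually_const_lt hΦt.2).and (Filter.eventually_ge_atTop 0)).exists
  obtain ⟨θ₀, hθ₀mem, hθ₀F⟩ : ∃ θ₀ ∈ Ioo (0:ℝ) M, F θ₀ = Φ t := by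
    have := intermediate_value_Ioo hM0 hFcont.continuousOn
    have hmem : Φ t ∈ Ioo (F 0) (F M) := by rw [hF0]; exact ⟨hΦt.1, hM1⟩
    obtain ⟨θ₀, hmem₀, hEq⟩ := this hmem
    exact ⟨θ₀, hmem₀, hEq⟩
  have hθ₀pos : 0 < θ₀ := hθ₀mem.1
  have hν0 : ν (Iic 0) = 0 := by
    rw [measure_Iic_eq_ofReal_cdfFn, ← hF, hF0, ENNReal.ofReal_zero]
  have hset : (Φi ∘ F) ⁻¹' Iic t ∩ Ioi 0 = Ioc 0 θ₀ := by
    ext θ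
    simp only [mem_inter_iff, mem_preimage, Function.comp_apply, mem_Iic, mem_Ioi, mem_Ioc]
    constructor
    · rintro ⟨hle, hθ⟩
      refine ⟨hθ, ?_⟩
      have hFθ := hFmem hθ
      have hΦinv : Φ (Φi (F θ)) = F θ := Function.invFun_eq (gaussCdf_surj hFθ)
      have h3 : Φ (Φi (F θ)) ≤ Φ t := strictMono_gaussCdf.le_iff_le.mpr hle
      rw [hΦinv, ← hθ₀F] at h3
      exact (hFmono.le_iff_le hθ.le hθ₀pos.le).mp h3
    · rintro ⟨hθ, hle⟩
      refine ⟨?_, hθ⟩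
      have hFθ := hFmem hθ
      have hΦinv : Φ (Φi (F θ)) = F θ := Function.invFun_eq (gaussCdf_surj hFθ)
      have hle2 : F θ ≤ F θ₀ := (hFmono.le_iff_le hθ.le hθ₀pos.le).mpr hle
      have h3 : Φ (Φi (F θ)) ≤ Φ t := by rw [hΦinv, ← hθ₀F]; exact hle2
      exact strictMono_gaussCdf.le_iff_le.mp h3
  have h1 : ν ((Φi ∘ F) ⁻¹' Iic t) = ν ((Φi ∘ F) ⁻¹' Iic t ∩ Ioi 0) := by
    have hd := measure_inter_add_diff (μ := ν) ((Φi ∘ F) ⁻¹' Iic t) (measurableSet_Ioi (a := (0:ℝ)))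
    have hnull : ν ((Φi ∘ F) ⁻¹' Iic t \ Ioi 0) = 0 :=
      measure_mono_null (fun x hx => by
        simp only [mem_diff, mem_Ioi, not_lt] at hx
        exact hx.2) hν0
    rw [← hd, hnull, add_zero]
  rw [h1, hset]
  have h2 : ν (Ioc 0 θ₀) = ν (Iic θ₀) := by
    rw [← Set.Iic_union_Ioc_eq_Iic hθ₀pos.le,
      measure_union (Set.Iic_disjoint_Ioc le_rfl) measurableSet_Ioc, hν0, zero_add]
  rw [h2, measure_Iic_eq_ofReal_cdfFn, ← hF, hθ₀F, measure_Iic_eq_ofReal_cdfFn, ← hΦ]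

end Transform

section Main
variable {r β ϑ : ℝ}

lemma sblPdf_eq {θ : ℝ} (hθ : 0 < θ) (x : ℝ) :
    sblPdf r β ϑ x θ = gaussianPDFReal 0 θ.toNNReal x * ggPdf r β ϑ θ := by
  unfold sblPdf gaussianPDFReal
  rw [if_pos hθ]
  have hc : ((θ.toNNReal : ℝ)) = θ := Real.coe_toNNReal θ hθ.le
  rw [hc, sub_zero]
  have h2 : (2 * π * θ) ^ (-(1 / 2 : ℝ)) = (Real.sqrt (2 * π * θ))⁻¹ := by
    rw [Real.rpow_neg (by positivity : (0:ℝ) ≤ 2 * π * θ), Real.sqrt_eq_rpow]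
  rw [h2]

lemma measurable_sblPdf_pair (r β ϑ : ℝ) :
    Measurable (fun p : ℝ × ℝ => ENNReal.ofReal (sblPdf r β ϑ p.1 p.2)) := by
  apply ENNReal.measurable_ofReal.comp
  unfold sblPdf
  apply Measurable.ite (measurableSet_lt measurable_const measurable_snd)
  · apply Measurable.mul
    · apply Measurable.mul
      · exact (measurable_const.mul measurable_snd).pow_const _
      · exact ((measurable_fst.pow_const 2).neg.div
          (measurable_const.mul measurable_snd)).exp
    · exact (measurable_ggPdf r β ϑ).comp measurable_snd
  · exact measurable_const

lemma gauss_prod_eq :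
    (gaussianReal 0 1).prod (gaussianReal 0 1)
      = volume.withDensity (fun q : ℝ × ℝ =>
          ENNReal.ofReal ((2 * π)⁻¹ * Real.exp (-(q.1 ^ 2 + q.2 ^ 2) / 2))) := by
  have hpt : ∀ x y : ℝ, ENNReal.ofReal ((2 * π)⁻¹ * Real.exp (-(x ^ 2 + y ^ 2) / 2))
      = ENNReal.ofReal (gaussianPDFReal 0 1 x) * ENNReal.ofReal (gaussianPDFReal 0 1 y) := by
    intro x y
    rw [← ENNReal.ofReal_mul (gaussianPDFReal_nonneg 0 1 x)]
    congr 1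
    unfold gaussianPDFReal
    have h1 : ((1 : NNReal) : ℝ) = 1 := NNReal.coe_one
    rw [h1, sub_zero, sub_zero, mul_one, mul_one]
    have h2 : Real.sqrt (2 * π) * Real.sqrt (2 * π) = 2 * π :=
      Real.mul_self_sqrt (by positivity)
    have h3 : (Real.sqrt (2 * π))⁻¹ * (Real.sqrt (2 * π))⁻¹ = (2 * π)⁻¹ := by
      rw [← mul_inv, h2]
    rw [show (Real.sqrt (2 * π))⁻¹ * Real.exp (-x ^ 2 / 2)
          * ((Real.sqrt (2 * π))⁻¹ * Real.exp (-y ^ 2 / 2))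
        = ((Real.sqrt (2 * π))⁻¹ * (Real.sqrt (2 * π))⁻¹)
          * (Real.exp (-x ^ 2 / 2) * Real.exp (-y ^ 2 / 2)) from by ring,
      h3, ← Real.exp_add]
    congr 1
    ring
  refine (Measure.prod_eq fun s t hs ht => ?_)
  rw [withDensity_apply _ (hs.prod ht), Measure.volume_eq_prod, ← Measure.prod_restrict]
  have : ∀ q : ℝ × ℝ, ENNReal.ofReal ((2 * π)⁻¹ * Real.exp (-(q.1 ^ 2 + q.2 ^ 2) / 2))
      = ENNReal.ofReal (gaussianPDFReal 0 1 q.1) * ENNReal.ofReal (gaussianPDFReal 0 1 q.2) :=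
    fun q => hpt q.1 q.2
  rw [lintegral_congr this, lintegral_prod_mul
    (f := fun x => ENNReal.ofReal (gaussianPDFReal 0 1 x))
    (g := fun x => ENNReal.ofReal (gaussianPDFReal 0 1 x))
    (measurable_gaussianPDFReal 0 1).ennreal_ofReal.aemeasurable
    (measurable_gaussianPDFReal 0 1).ennreal_ofReal.aemeasurable]
  rw [gaussianReal_eq_withDensity, withDensity_apply _ hs, withDensity_apply _ ht]

end Main


theorem KR_map_pushforward (r β ϑ : ℝ) (hr : r ≠ 0) (hβ : 0 < β) (hϑ : 0 < ϑ)
    (μ : Measure (ℝ × ℝ))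
    (hμ : μ = volume.withDensity (fun p => ENNReal.ofReal (sblPdf r β ϑ p.1 p.2)))
    (sθ : ℝ → ℝ)
    (hsθ : sθ = Function.invFun (cdfFn (gaussianReal 0 1)) ∘
        cdfFn (volume.withDensity (fun θ => ENNReal.ofReal (ggPdf r β ϑ θ))))
    (s : ℝ × ℝ → ℝ × ℝ)
    (hs : s = fun p => if 0 < p.2 then (sθ p.2, p.1 / Real.sqrt p.2) else (0, 0)) :
    μ.map s
      = volume.withDensity
          (fun q => ENNReal.ofReal ((2 * π)⁻¹ * Real.exp (-(q.1 ^ 2 + q.2 ^ 2) / 2))) := by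
  classical
  subst hμ
  have hggmeas : Measurable fun θ : ℝ => ENNReal.ofReal (ggPdf r β ϑ θ) :=
    (measurable_ggPdf r β ϑ).ennreal_ofReal
  have hFcont : Continuous (cdfFn (volume.withDensity
      fun θ : ℝ => ENNReal.ofReal (ggPdf r β ϑ θ))) :=
    continuous_cdfFn_withDensity (integrable_ggPdf hr hβ hϑ) (ggPdf_nonneg hβ hϑ)
  have hsθm : Measurable sθ := by
    rw [hsθ]
    exact measurable_invFun_gaussCdf.comp hFcont.measurable
  have hsmeas : Measurable s := by
    rw [hs]
    refine Measurable.ite (measurableSet_lt measurable_const measurable_snd) ?_ measurable_const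
    exact (hsθm.comp measurable_snd).prodMk
      (measurable_fst.div (Real.continuous_sqrt.measurable.comp measurable_snd))
  ext A hA
  rw [← gauss_prod_eq]
  rw [Measure.map_apply hsmeas hA, withDensity_apply _ (hsmeas hA),
    ← lintegral_indicator (hsmeas hA), Measure.volume_eq_prod,
    lintegral_prod_symm _ ((measurable_sblPdf_pair r β ϑ).indicator (hsmeas hA)).aemeasurable]
  have hinner : ∀ θ : ℝ,
      (∫⁻ x, ((s ⁻¹' A).indicator
          (fun p : ℝ × ℝ => ENNReal.ofReal (sblPdf r β ϑ p.1 p.2))) (x, θ))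
        = ENNReal.ofReal (ggPdf r β ϑ θ) * (gaussianReal 0 1) (Prod.mk (sθ θ) ⁻¹' A) := by
    intro θ
    by_cases hθ : 0 < θ
    · have hC : MeasurableSet (Prod.mk (sθ θ) ⁻¹' A) := measurable_prodMk_left hA
      have hvθ : θ.toNNReal ≠ 0 :=
        fun h => absurd (Real.toNNReal_eq_zero.mp h) (not_le.mpr hθ)
      have hB : MeasurableSet ((fun u : ℝ => u / Real.sqrt θ) ⁻¹' (Prod.mk (sθ θ) ⁻¹' A)) :=
        (measurable_id.div_const (Real.sqrt θ)) hC
      have hptw : ∀ x : ℝ,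
          ((s ⁻¹' A).indicator
            (fun p : ℝ × ℝ => ENNReal.ofReal (sblPdf r β ϑ p.1 p.2))) (x, θ)
          = ENNReal.ofReal (ggPdf r β ϑ θ)
            * ((fun u : ℝ => u / Real.sqrt θ) ⁻¹' (Prod.mk (sθ θ) ⁻¹' A)).indicator
                (gaussianPDF 0 θ.toNNReal) x := by
        intro x
        have hmem : ((x, θ) ∈ s ⁻¹' A)
            ↔ (x / Real.sqrt θ ∈ Prod.mk (sθ θ) ⁻¹' A) := by
          rw [Set.mem_preimage, Set.mem_preimage, hs]
          simp only [if_pos hθ]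
        rw [Set.indicator_apply, Set.indicator_apply]
        by_cases hm : (x, θ) ∈ s ⁻¹' A
        · rw [if_pos hm, if_pos (by
            simpa using hmem.mp hm)]
          rw [sblPdf_eq hθ x, ENNReal.ofReal_mul (gaussianPDFReal_nonneg _ _ _)]
          simp only [gaussianPDF_def]
          rw [mul_comm]
        · rw [if_neg hm, if_neg (by
            intro h
            exact hm (hmem.mpr (by simpa using h))), mul_zero]
      rw [lintegral_congr hptw,
        lintegral_const_mul _ ((measurable_gaussianPDF 0 θ.toNNReal).indicator hB),
        lintegral_indicator hB, ← gaussianReal_apply 0 hvθ]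
      congr 1
      have hfun : (fun u : ℝ => u / Real.sqrt θ) = fun u => (Real.sqrt θ)⁻¹ * u :=
        funext fun u => div_eq_inv_mul u _
      rw [hfun, ← Measure.map_apply (continuous_mul_left ((Real.sqrt θ)⁻¹)).measurable hC,
        gaussianReal_map_const_mul]
      have hnn : (NNReal.mk (((Real.sqrt θ)⁻¹) ^ 2) (sq_nonneg _) * θ.toNNReal) = 1 := by
        apply NNReal.coe_injective
        rw [NNReal.coe_mul, NNReal.coe_one, Real.coe_toNNReal _ hθ.le]
        show (Real.sqrt θ)⁻¹ ^ 2 * θ = 1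
        rw [inv_pow, Real.sq_sqrt hθ.le]
        exact inv_mul_cancel₀ hθ.ne'
      rw [hnn, mul_zero]
    · have h1 : ∀ x : ℝ,
          ((s ⁻¹' A).indicator
            (fun p : ℝ × ℝ => ENNReal.ofReal (sblPdf r β ϑ p.1 p.2))) (x, θ) = 0 := by
        intro x
        rw [Set.indicator_apply]
        split_ifs with hm
        · show ENNReal.ofReal (sblPdf r β ϑ x θ) = 0
          unfold sblPdf
          rw [if_neg hθ, ENNReal.ofReal_zero]
        · rfl
      rw [lintegral_congr h1, lintegral_zero]
      have hgg0 : ggPdf r β ϑ θ = 0 := by unfold ggPdf; rw [if_neg hθ]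
      rw [hgg0, ENNReal.ofReal_zero, zero_mul]
  rw [lintegral_congr hinner]
  have hH : Measurable fun τ : ℝ => (gaussianReal 0 1) (Prod.mk τ ⁻¹' A) :=
    measurable_measure_prodMk_left hA
  calc (∫⁻ θ, ENNReal.ofReal (ggPdf r β ϑ θ)
          * (gaussianReal 0 1) (Prod.mk (sθ θ) ⁻¹' A))
      = ∫⁻ θ, (gaussianReal 0 1) (Prod.mk (sθ θ) ⁻¹' A)
          ∂(volume.withDensity fun θ : ℝ => ENNReal.ofReal (ggPdf r β ϑ θ)) :=
        (lintegral_withDensity_eq_lintegral_mul volume hggmeas (hH.comp hsθm)).symm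
    _ = ∫⁻ τ, (gaussianReal 0 1) (Prod.mk τ ⁻¹' A)
          ∂((volume.withDensity fun θ : ℝ => ENNReal.ofReal (ggPdf r β ϑ θ)).map sθ) :=
        (lintegral_map hH hsθm).symm
    _ = ∫⁻ τ, (gaussianReal 0 1) (Prod.mk τ ⁻¹' A) ∂(gaussianReal 0 1) := by
        rw [hsθ, map_KR_theta hr hβ hϑ]
    _ = (gaussianReal 0 1).prod (gaussianReal 0 1) A := (Measure.prod_apply hA).symm
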